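/- Let M be a complex 2n×2n Hamiltonian matrix, let λ, λ' ∈ ℂ with λ + λ' ≠ 0, and let ξ, ξ' ∈ ℂ^{2n} be generalized eigenvectors, i.e. ξ ∈ ker((M − λ·I)^j) and ξ' ∈ ker((M − λ'·I)^l) for some natural numbers j, l. Then ξᵀ·Ω·ξ' = 0. -/
import Mathlib


open Matrix

/-- The standard symplectic matrix `Ω = [[0, I],[−I, 0]]`, over `ℂ`. -/
noncomputable def OmegaC (n : ℕ) : Matrix (Fin n ⊕ Fin n) (Fin n ⊕ Fin n) ℂ :=
  Matrix.fromBlocks 0 1 (-1) 0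

theorem generalized_eigenvectors_omega_orthogonal {n : ℕ} (hn : 1 ≤ n)
    (M : Matrix (Fin n ⊕ Fin n) (Fin n ⊕ Fin n) ℂ)
    (hham : (OmegaC n * M)ᵀ = OmegaC n * M)
    (lam lam' : ℂ) (hsum : lam + lam' ≠ 0)
    (ξ ξ' : Fin n ⊕ Fin n → ℂ) (j l : ℕ)
    (hξ : ((M - lam • (1 : Matrix (Fin n ⊕ Fin n) (Fin n ⊕ Fin n) ℂ)) ^ j).mulVec ξ = 0)
    (hξ' : ((M - lam' • (1 : Matrix (Fin n ⊕ Fin n) (Fin n ⊕ Fin n) ℂ)) ^ l).mulVec ξ' = 0) :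
    ξ ⬝ᵥ (OmegaC n).mulVec ξ' = 0 := by
  set Ω := OmegaC n with hΩdef
  have hΩT : Ωᵀ = -Ω := by
    simp [hΩdef, OmegaC, Matrix.fromBlocks_transpose, Matrix.fromBlocks_neg]
  have hMTΩ : Mᵀ * Ω = -(Ω * M) := by
    have h1 : (Ω * M)ᵀ = Mᵀ * Ωᵀ := Matrix.transpose_mul _ _
    rw [hΩT, Matrix.mul_neg] at h1
    rw [← hham, h1, neg_neg]
  have key : ∀ x y : Fin n ⊕ Fin n → ℂ,
      (M *ᵥ x) ⬝ᵥ (Ω *ᵥ y) = - (x ⬝ᵥ (Ω *ᵥ (M *ᵥ y))) := by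
    intro x y
    rw [Matrix.mulVec_mulVec, show (M *ᵥ x) ⬝ᵥ (Ω *ᵥ y) = x ⬝ᵥ ((Mᵀ * Ω) *ᵥ y) by
      rw [Matrix.dotProduct_mulVec, Matrix.dotProduct_mulVec, ← Matrix.vecMul_vecMul,
        Matrix.vecMul_transpose],
      hMTΩ]
    simp [Matrix.neg_mulVec]
  -- main induction
  suffices H : ∀ k j l : ℕ, j + l ≤ k → ∀ x y : Fin n ⊕ Fin n → ℂ,
      ((M - lam • (1 : Matrix (Fin n ⊕ Fin n) (Fin n ⊕ Fin n) ℂ)) ^ j) *ᵥ x = 0 →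
      ((M - lam' • (1 : Matrix (Fin n ⊕ Fin n) (Fin n ⊕ Fin n) ℂ)) ^ l) *ᵥ y = 0 →
      x ⬝ᵥ (Ω *ᵥ y) = 0 by
    exact H (j + l) j l le_rfl ξ ξ' hξ hξ'
  intro k
  induction k with
  | zero =>
    intro j l hjl x y hx hy
    obtain ⟨hj, hl⟩ : j = 0 ∧ l = 0 := by omega
    subst hj; simp only [pow_zero, Matrix.one_mulVec] at hx
    simp [hx]
  | succ k ih =>
    intro j l hjl x y hx hy
    rcases Nat.eq_zero_or_pos j with hj | hj
    · subst hj; simp only [pow_zero, Matrix.one_mulVec] at hx; simp [hx]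
    rcases Nat.eq_zero_or_pos l with hl | hl
    · subst hl; simp only [pow_zero, Matrix.one_mulVec] at hy; simp [hy]
    obtain ⟨j₁, rfl⟩ := Nat.exists_eq_succ_of_ne_zero (Nat.pos_iff_ne_zero.mp hj)
    obtain ⟨l₁, rfl⟩ := Nat.exists_eq_succ_of_ne_zero (Nat.pos_iff_ne_zero.mp hl)
    set N := M - lam • (1 : Matrix (Fin n ⊕ Fin n) (Fin n ⊕ Fin n) ℂ) with hN
    set N' := M - lam' • (1 : Matrix (Fin n ⊕ Fin n) (Fin n ⊕ Fin n) ℂ) with hN'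
    have hx1 : (N ^ j₁) *ᵥ (N *ᵥ x) = 0 := by
      rw [Matrix.mulVec_mulVec, ← pow_succ]; exact hx
    have hy1 : (N' ^ l₁) *ᵥ (N' *ᵥ y) = 0 := by
      rw [Matrix.mulVec_mulVec, ← pow_succ]; exact hy
    have ih1 : (N *ᵥ x) ⬝ᵥ (Ω *ᵥ y) = 0 := ih j₁ (l₁ + 1) (by omega) _ _ hx1 hy
    have ih2 : x ⬝ᵥ (Ω *ᵥ (N' *ᵥ y)) = 0 := ih (j₁ + 1) l₁ (by omega) _ _ hx hy1
    have hMx : M *ᵥ x = N *ᵥ x + lam • x := by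
      simp [hN, Matrix.sub_mulVec, Matrix.smul_mulVec, Matrix.one_mulVec]
    have hMy : M *ᵥ y = N' *ᵥ y + lam' • y := by
      simp [hN', Matrix.sub_mulVec, Matrix.smul_mulVec, Matrix.one_mulVec]
    have hk := key x y
    rw [hMx, hMy] at hk
    simp only [add_dotProduct, smul_dotProduct, Matrix.mulVec_add,
      Matrix.mulVec_smul, dotProduct_add, dotProduct_smul, ih1, ih2,
      zero_add, smul_eq_mul] at hk
    have : (lam + lam') * (x ⬝ᵥ (Ω *ᵥ y)) = 0 := by linear_combination hk
    exact (mul_eq_zero.mp this).resolve_left hsum
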